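/- Let 0 < λ < 4, λ = 2 − 2cos θ with θ ∈ (0,π), and let q₁ : ℕ → ℝ. Then the function x(n) defined recursively by x(n) = sin(nθ) + (1/sin θ)·Σ_{s=1}^{n} q₁(s) x(s) sin((n−s)θ) satisfies the difference equation −Δ²x(n−1) + q₁(n)x(n) = λx(n) for all n ≥ 1, together with x(0) = 0. -/

import Mathlib

/-- The sum representation `x n = sin(nθ) + (1/sinθ) Σ_{s=1}^{n} q₁(s) x(s) sin((n-s)θ)`
satisfies `-Δ²x(n-1) + q₁(n) x(n) = λ x(n)` for `n ≥ 1` and `x 0 = 0`. -/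
theorem sum_representation_solves (θ lam : ℝ) (h0 : 0 < θ) (hπ : θ < Real.pi)
    (hl0 : 0 < lam) (hl4 : lam < 4) (hlam : lam = 2 - 2 * Real.cos θ)
    (q₁ : ℕ → ℝ) (x : ℕ → ℝ)
    (hx : ∀ n : ℕ, x n = Real.sin ((n : ℝ) * θ) +
      (1 / Real.sin θ) * ∑ s ∈ Finset.Icc 1 n, q₁ s * x s * Real.sin (((n : ℝ) - (s : ℝ)) * θ)) :
    x 0 = 0 ∧ ∀ n : ℕ, 1 ≤ n →
      -(x (n + 1) - 2 * x n + x (n - 1)) + q₁ n * x n = lam * x n := by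
  have hs : Real.sin θ ≠ 0 := ne_of_gt (Real.sin_pos_of_pos_of_lt_pi h0 hπ)
  constructor
  · rw [hx 0]; simp
  · intro n hn
    obtain ⟨m, rfl⟩ : ∃ m, n = m + 1 := ⟨n - 1, (Nat.succ_pred_eq_of_pos hn).symm⟩
    simp only [Nat.add_sub_cancel]
    have key : x (m + 2) + x m - 2 * Real.cos θ * x (m + 1)
        = q₁ (m + 1) * x (m + 1) := by
      rw [hx (m + 2), hx (m + 1), hx m]
      rw [show m + 2 = (m + 1) + 1 from rfl,
        Finset.sum_Icc_succ_top (by omega), Finset.sum_Icc_succ_top (by omega),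
        Finset.sum_Icc_succ_top (by omega)]
      push_cast
      have hsum : (∑ s ∈ Finset.Icc 1 m, q₁ s * x s * Real.sin (((m : ℝ) + 1 + 1 - s) * θ))
          + (∑ s ∈ Finset.Icc 1 m, q₁ s * x s * Real.sin (((m : ℝ) - s) * θ))
          = 2 * Real.cos θ * ∑ s ∈ Finset.Icc 1 m,
              q₁ s * x s * Real.sin (((m : ℝ) + 1 - s) * θ) := by
        rw [Finset.mul_sum, ← Finset.sum_add_distrib]
        refine Finset.sum_congr rfl fun s _ => ?_
        rw [show ((m : ℝ) + 1 + 1 - s) * θ = ((m : ℝ) + 1 - s) * θ + θ by ring,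
          show ((m : ℝ) - s) * θ = ((m : ℝ) + 1 - s) * θ - θ by ring,
          Real.sin_add, Real.sin_sub]
        ring
      have htop : Real.sin (((m : ℝ) + 1 + 1) * θ) + Real.sin ((m : ℝ) * θ)
          = 2 * Real.cos θ * Real.sin (((m : ℝ) + 1) * θ) := by
        rw [show ((m : ℝ) + 1 + 1) * θ = ((m : ℝ) + 1) * θ + θ by ring,
          show (m : ℝ) * θ = ((m : ℝ) + 1) * θ - θ by ring,
          Real.sin_add, Real.sin_sub]
        ring
      have e1 : Real.sin (((m : ℝ) + 1 + 1 - ((m : ℝ) + 1 + 1)) * θ) = 0 := by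
        norm_num
      have e2 : Real.sin (((m : ℝ) + 1 + 1 - ((m : ℝ) + 1)) * θ) = Real.sin θ := by
        norm_num
      have e3 : Real.sin (((m : ℝ) + 1 - ((m : ℝ) + 1)) * θ) = 0 := by
        norm_num
      have hx1 : Real.sin θ * x (m + 1) = Real.sin θ * Real.sin (((m : ℝ) + 1) * θ)
          + ∑ s ∈ Finset.Icc 1 m, q₁ s * x s * Real.sin (((m : ℝ) + 1 - s) * θ) := by
        rw [hx (m + 1), Finset.sum_Icc_succ_top (by omega)]
        push_cast
        rw [e3]
        field_simp
        ring
      rw [e1, e2, e3]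
      field_simp
      simp only [mul_comm θ]
      linear_combination hsum + Real.sin θ * htop + q₁ (m + 1) * hx1
    linear_combination (-(x (m + 1))) * hlam - key
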